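/- Suppose κ_i, λ_i (1 ≤ i ≤ s) are infinite cardinals with κ_i > beth_{r-1}(λ_i) and λ_{i+1} ≥ 2^{κ_i} for all relevant i, and λ_1 is infinite. Then the polarized partition relation (κ_1, …, κ_s) → (λ_1^+, …, λ_s^+)^r_{λ_1} holds: for every coloring of [κ_1]^r × … × [κ_s]^r in λ_1 colors, there exist sets X_i ⊆ κ_i with |X_i| = λ_i^+ such that [X_1]^r × … × [X_s]^r is monochromatic. -/

import Mathlib

open Cardinal

/-- Iterated power-set cardinal: `iterBeth κ 0 = κ`, `iterBeth κ (n+1) = 2 ^ iterBeth κ n`. -/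
def iterBeth (κ : Cardinal) : ℕ → Cardinal
  | 0 => κ
  | n + 1 => 2 ^ iterBeth κ n

/-- The polarized partition relation `(κ_1,…,κ_s) → (l_1,…,l_s)^r_μ`: every coloring of
`[κ_1]^r × … × [κ_s]^r` in at most `μ` colors admits sets `X_i` of size `l_i` whose
product of `r`-element subsets is monochromatic. -/
def Polarized (s : ℕ) (κ l : Fin s → Cardinal) (r : ℕ) (μ : Cardinal) : Prop :=
  ∀ (A : Fin s → Type), (∀ i, #(A i) = κ i) →
    ∀ (ι : Type), #ι ≤ μ →
      ∀ c : (∀ i, Finset (A i)) → ι,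
        ∃ X : ∀ i, Set (A i), (∀ i, #(X i) = l i) ∧
          ∀ f g : ∀ i, Finset (A i),
            (∀ i, ↑(f i) ⊆ X i ∧ (f i).card = r) →
            (∀ i, ↑(g i) ⊆ X i ∧ (g i).card = r) →
            c f = c g

lemma le_iterBeth (a : Cardinal) : ∀ n, a ≤ iterBeth a n
  | 0 => le_rfl
  | n + 1 => le_trans (le_iterBeth a n) (le_of_lt (Cardinal.cantor _))

lemma mk_finset_le' (γ : Type u) : #(Finset γ) ≤ max ℵ₀ #γ := by
  rcases finite_or_infinite γ with h | h
  · exact le_max_of_le_left mk_le_aleph0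
  · rw [mk_finset_of_infinite]; exact le_max_right _ _

lemma mk_finset_subset_le {β : Type u} (X : Set β) :
    #{u : Finset β // ↑u ⊆ X} ≤ max ℵ₀ #X := by
  classical
  have h1 : #{u : Finset β // ↑u ⊆ X} ≤ #(Finset X) := by
    apply mk_le_of_injective (f := fun u : {u : Finset β // ↑u ⊆ X} =>
      Finset.subtype (· ∈ X) u.1)
    intro u v h
    apply Subtype.ext
    have hu' : u.1.filter (· ∈ X) = u.1 :=
      Finset.filter_true_of_mem fun x hx => u.2 hx
    have hv' : v.1.filter (· ∈ X) = v.1 :=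
      Finset.filter_true_of_mem fun x hx => v.2 hx
    calc u.1 = (Finset.subtype (· ∈ X) u.1).map (Function.Embedding.subtype _) := by
            rw [Finset.subtype_map, hu']
      _ = (Finset.subtype (· ∈ X) v.1).map (Function.Embedding.subtype _) := by
            rw [show Finset.subtype (fun x => x ∈ X) u.1 = Finset.subtype (fun x => x ∈ X) v.1 from h]
      _ = v.1 := by rw [Finset.subtype_map, hv']
  exact h1.trans (mk_finset_le' _)

section ER

variable {A ι : Type}

attribute [local instance 0] Classical.propDecidable

def ERCtxEqv (c : Finset A → ι) (r : ℕ) (P : Set A) (a b : A) : Prop :=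
  ∀ x : Finset A, ↑x ⊆ P → x.card = r + 1 → c (insert b x) = c (insert a x)

def ERCond (c : Finset A → ι) (r : ℕ) (S P : Set A) (a b : A) : Prop :=
  b ∈ S ∧ b ∉ P ∧ ERCtxEqv c r P a b

noncomputable def ERseq (c : Finset A → ι) (r : ℕ) (S : Set A)
    (O : Type) [LinearOrder O] [WellFoundedLT O] (a : A) : O → Option A :=
  (wellFounded_lt).fix fun i rec =>
    if h : {b | ERCond c r S {b' | ∃ j, ∃ hj : j < i, rec j hj = some b'} a b}.Nonempty
    then some ((IsWellFounded.wf (r := @WellOrderingRel A)).min _ h)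
    else none

def ERprev (c : Finset A → ι) (r : ℕ) (S : Set A)
    (O : Type) [LinearOrder O] [WellFoundedLT O] (a : A) (i : O) : Set A :=
  {b | ∃ j, ∃ _ : j < i, ERseq c r S O a j = some b}

lemma ERseq_eq (c : Finset A → ι) (r : ℕ) (S : Set A)
    (O : Type) [LinearOrder O] [WellFoundedLT O] (a : A) (i : O) :
    ERseq c r S O a i =
      if h : {b | ERCond c r S (ERprev c r S O a i) a b}.Nonempty
      then some ((IsWellFounded.wf (r := @WellOrderingRel A)).min _ h)
      else none :=
  WellFounded.fix_eq _ _ _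

lemma ERseq_some {c : Finset A → ι} {r : ℕ} {S : Set A}
    {O : Type} [LinearOrder O] [WellFoundedLT O] {a b : A} {i : O}
    (hb : ERseq c r S O a i = some b) : ERCond c r S (ERprev c r S O a i) a b := by
  rw [ERseq_eq] at hb
  split at hb
  · rename_i h
    injection hb with hb'
    rw [← hb']
    exact WellFounded.min_mem _ _ h
  · cases hb

lemma ERseq_none {c : Finset A → ι} {r : ℕ} {S : Set A}
    {O : Type} [LinearOrder O] [WellFoundedLT O] {a : A} {i : O}
    (hb : ERseq c r S O a i = none) : ¬ {b | ERCond c r S (ERprev c r S O a i) a b}.Nonempty := by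
  rw [ERseq_eq] at hb
  split at hb
  · cases hb
  · assumption


variable (c : Finset A → ι) (r : ℕ) (S : Set A)
  (O : Type) [LinearOrder O] [WellFoundedLT O]

lemma ERprev_mono {a : A} {j i : O} (h : j < i) :
    ERprev c r S O a j ⊆ ERprev c r S O a i := by
  rintro b ⟨j', hj', hb⟩
  exact ⟨j', hj'.trans h, hb⟩

noncomputable def ERiA [Nonempty O] (a : A) : O :=
  if h : ∃ i : O, ERseq c r S O a i = none then
    wellFounded_lt.min {i | ERseq c r S O a i = none} h
  else Classical.arbitrary O

lemma ERiA_none [Nonempty O] {a : A} (h : ∃ i : O, ERseq c r S O a i = none) :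
    ERseq c r S O a (ERiA c r S O a) = none := by
  rw [ERiA, dif_pos h]
  exact WellFounded.min_mem _ _ h

lemma ERiA_min [Nonempty O] {a : A} (h : ∃ i : O, ERseq c r S O a i = none)
    {j : O} (hj : j < ERiA c r S O a) : (ERseq c r S O a j).isSome := by
  by_contra hn
  rw [ERiA, dif_pos h] at hj
  exact wellFounded_lt.not_lt_min {i | ERseq c r S O a i = none}
    (Option.not_isSome_iff_eq_none.mp hn) hj

noncomputable def ERval (a₀ : A) (a : A) (j : O) : A := (ERseq c r S O a j).getD a₀

noncomputable def ERTa [Nonempty O] (a₀ a : A) : Finset O → ι :=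
  fun u => c (insert a ((u.filter (· < ERiA c r S O a)).image (ERval c r S O a₀ a)))

/-- if `a ∈ S` and the sequence for `a` terminates, then `a` occurs in its own sequence. -/
lemma ER_self_mem [Nonempty O] {a : A} (haS : a ∈ S)
    (h : ∃ i : O, ERseq c r S O a i = none) :
    ∃ j : O, ∃ _ : j < ERiA c r S O a, ERseq c r S O a j = some a := by
  have hn := ERseq_none (ERiA_none c r S O h)
  by_contra hnot
  exact hn ⟨a, haS, hnot, fun x hx hxc => rfl⟩

noncomputable def ERjA [Nonempty O] (a : A) : O :=
  if h : ∃ j : O, ∃ _ : j < ERiA c r S O a, ERseq c r S O a j = some a then h.choose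
  else Classical.arbitrary O

lemma ERjA_spec [Nonempty O] {a : A} (haS : a ∈ S)
    (h : ∃ i : O, ERseq c r S O a i = none) :
    ERjA c r S O a < ERiA c r S O a ∧ ERseq c r S O a (ERjA c r S O a) = some a := by
  have hex := ER_self_mem c r S O haS h
  rw [ERjA, dif_pos hex]
  obtain ⟨h1, h2⟩ := hex.choose_spec
  exact ⟨h1, h2⟩


lemma ER_injOn [Nonempty O] (a₀ : A)
    (hterm : ∀ a : A, ∃ i : O, ERseq c r S O a i = none) :
    Set.InjOn (fun a => (ERiA c r S O a, ERjA c r S O a, ERTa c r S O a₀ a)) S := by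
  intro a ha a' ha' hPhi
  obtain ⟨hI, hJ, hT⟩ : ERiA c r S O a = ERiA c r S O a' ∧ ERjA c r S O a = ERjA c r S O a'
      ∧ ERTa c r S O a₀ a = ERTa c r S O a₀ a' := by
    simpa [Prod.ext_iff] using hPhi
  have claim : ∀ j : O, j < ERiA c r S O a → ERseq c r S O a j = ERseq c r S O a' j := by
    intro j
    induction j using WellFoundedLT.induction with
    | _ j IH =>
    intro hj
    have hPeq : ERprev c r S O a j = ERprev c r S O a' j := by
      ext b
      constructor
      · rintro ⟨j', hj', hb⟩
        exact ⟨j', hj', by rw [← IH j' hj' (hj'.trans hj)]; exact hb⟩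
      · rintro ⟨j', hj', hb⟩
        exact ⟨j', hj', by rw [IH j' hj' (hj'.trans hj)]; exact hb⟩
    have haa' : ∀ x : Finset A, ↑x ⊆ ERprev c r S O a j → x.card = r + 1 →
        c (insert a x) = c (insert a' x) := by
      intro x hx hxc
      classical
      have hidx : ∀ b ∈ x, ∃ j' : O, ∃ _ : j' < j, ERseq c r S O a j' = some b :=
        fun b hb => hx hb
      choose idx hlt heq using hidx
      set u : Finset O := x.attach.image (fun b => idx b.1 b.2) with hu
      have humem : ∀ o ∈ u, o < j := by
        intro o ho
        rcases Finset.mem_image.mp ho with ⟨b, _, rfl⟩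
        exact hlt b.1 b.2
      have himg : ∀ (w : A), (∀ b (hb : b ∈ x), ERval c r S O a₀ w (idx b hb) = b) →
          u.image (ERval c r S O a₀ w) = x := by
        intro w hw
        apply Finset.Subset.antisymm
        · intro y hy
          rcases Finset.mem_image.mp hy with ⟨o, ho, rfl⟩
          rcases Finset.mem_image.mp ho with ⟨b, _, rfl⟩
          rw [hw b.1 b.2]
          exact b.2
        · intro b hb
          exact Finset.mem_image.mpr ⟨idx b hb,
            Finset.mem_image.mpr ⟨⟨b, hb⟩, Finset.mem_attach _ _, rfl⟩, hw b hb⟩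
      have hva : ∀ b (hb : b ∈ x), ERval c r S O a₀ a (idx b hb) = b := by
        intro b hb; rw [ERval, heq b hb]; rfl
      have hva' : ∀ b (hb : b ∈ x), ERval c r S O a₀ a' (idx b hb) = b := by
        intro b hb
        rw [ERval, ← IH (idx b hb) (hlt b hb) ((hlt b hb).trans hj), heq b hb]; rfl
      have hT1 : ERTa c r S O a₀ a u = c (insert a x) := by
        rw [ERTa]
        rw [Finset.filter_true_of_mem (fun o ho => (humem o ho).trans hj), himg a hva]
      have hT2 : ERTa c r S O a₀ a' u = c (insert a' x) := by
        rw [ERTa]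
        rw [Finset.filter_true_of_mem (fun o ho => (humem o ho).trans (hI ▸ hj)), himg a' hva']
      rw [← hT1, ← hT2, hT]
    have hset : {b | ERCond c r S (ERprev c r S O a j) a b}
        = {b | ERCond c r S (ERprev c r S O a' j) a' b} := by
      ext b
      rw [← hPeq]
      constructor
      · rintro ⟨h1, h2, h3⟩
        exact ⟨h1, h2, fun x hx hxc => by rw [h3 x hx hxc, haa' x hx hxc]⟩
      · rintro ⟨h1, h2, h3⟩
        exact ⟨h1, h2, fun x hx hxc => by
          rw [h3 x hx hxc]; exact (haa' x hx hxc).symm⟩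
    rw [ERseq_eq c r S O a j, ERseq_eq c r S O a' j]
    rw [hset]
  have h1 := (ERjA_spec c r S O ha (hterm a)).2
  have h1' := (ERjA_spec c r S O ha' (hterm a')).2
  have h2 := claim (ERjA c r S O a) (ERjA_spec c r S O ha (hterm a)).1
  rw [h1, hJ, h1'] at h2
  exact Option.some_injective _ h2

end ER

section ERMain

attribute [local instance 0] Classical.propDecidable

lemma erdosRado (ι : Type) (lam : Cardinal) (hlam : ℵ₀ ≤ lam) (hι : #ι ≤ lam) :
    ∀ (r : ℕ) (A : Type) (S : Set A) (c : Finset A → ι), iterBeth lam r < #↥S →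
      ∃ X : Set A, X ⊆ S ∧ #↥X = Order.succ lam ∧
        ∀ f g : Finset A, ↑f ⊆ X → f.card = r + 1 → ↑g ⊆ X → g.card = r + 1 → c f = c g := by
  intro r
  induction r with
  | zero =>
    intro A S c hS
    have hlamS : lam < #↥S := by simpa [iterBeth] using hS
    set d : S → ι := fun a => c {a.1} with hd
    have hfib : ∃ i : ι, lam < #(d ⁻¹' {i}) := by
      by_contra hcon
      push_neg at hcon
      have h1 : #↥S = sum fun i => #(d ⁻¹' {i}) := by
        rw [← mk_sigma]
        exact mk_congr (Equiv.sigmaFiberEquiv d).symm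
      have h2 : (sum fun i => #(d ⁻¹' {i})) ≤ sum fun _ : ι => lam :=
        sum_le_sum _ _ hcon
      rw [sum_const'] at h2
      have h3 : #↥S ≤ lam := by
        refine (h1.le.trans h2).trans ?_
        calc #ι * lam ≤ lam * lam := mul_le_mul_left hι lam
          _ = lam := mul_eq_self hlam
      exact hlamS.not_ge h3
    obtain ⟨i, hi⟩ := hfib
    obtain ⟨p, hp⟩ := le_mk_iff_exists_set.mp (Order.succ_le_of_lt hi)
    set emb : ↥(d ⁻¹' {i}) → A := fun x => x.1.1 with hemb
    have hembinj : Function.Injective emb :=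
      Subtype.val_injective.comp Subtype.val_injective
    refine ⟨emb '' p, ?_, ?_, ?_⟩
    · rintro x ⟨b, _, rfl⟩
      exact b.1.2
    · rw [mk_image_eq hembinj, hp]
    · have hval : ∀ f : Finset A, ↑f ⊆ emb '' p → f.card = 0 + 1 → c f = i := by
        intro f hf hfc
        obtain ⟨x, rfl⟩ := Finset.card_eq_one.mp (by simpa using hfc)
        have hx : x ∈ emb '' p := hf (Finset.mem_coe.mpr (Finset.mem_singleton_self x))
        obtain ⟨b, hbp, hbe⟩ := hx
        have hb2 := b.2
        simp only [Set.mem_preimage, Set.mem_singleton_iff] at hb2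
        rw [← hbe]
        exact hb2
      intro f g hf hfc hg hgc
      rw [hval f hf hfc, hval g hg hgc]
  | succ r ih =>
    intro A S c hS
    haveI : Nonempty ι := ⟨c ∅⟩
    set μ := iterBeth lam r with hμdef
    have hpow : (2 : Cardinal) ^ μ < #↥S := by
      have h0 : iterBeth lam (r + 1) = 2 ^ μ := rfl
      rwa [h0] at hS
    have hlamμ : lam ≤ μ := le_iterBeth lam r
    have hμinf : ℵ₀ ≤ μ := hlam.trans hlamμ
    have hμ2 : μ ≤ 2 ^ μ := (Cardinal.cantor μ).le
    have hsucc2 : Order.succ μ ≤ 2 ^ μ := Order.succ_le_of_lt (Cardinal.cantor μ)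
    have hSne : Nonempty ↥S := by
      rw [← Cardinal.mk_ne_zero_iff]
      exact (lt_of_le_of_lt zero_le hpow).ne'
    obtain ⟨a₀, ha₀⟩ := hSne
    haveI hOne : Nonempty ((Order.succ μ).ord.ToType) := by
      rw [← Cardinal.mk_ne_zero_iff, mk_ord_toType]
      exact (lt_of_lt_of_le aleph0_pos (hμinf.trans (Order.le_succ μ))).ne'
    by_cases hcase : ∃ a : A, ∀ i : (Order.succ μ).ord.ToType,
        (ERseq c r S ((Order.succ μ).ord.ToType) a i).isSome
    · -- Case A : a full-length sequence exists
      obtain ⟨a, ha⟩ := hcase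
      set O := (Order.succ μ).ord.ToType
      set E : O → A := fun i => (ERseq c r S O a i).get (ha i) with hE
      have hEsome : ∀ i, ERseq c r S O a i = some (E i) := fun i =>
        (Option.some_get (ha i)).symm
      have hcond : ∀ i, ERCond c r S (ERprev c r S O a i) a (E i) := fun i =>
        ERseq_some (hEsome i)
      have hEinj : Function.Injective E := by
        intro i j hij
        by_contra hne
        rcases lt_or_gt_of_ne hne with h | h
        · exact (hcond j).2.1 ⟨i, h, by rw [hEsome i, hij]⟩
        · exact (hcond i).2.1 ⟨j, h, by rw [hEsome j, ← hij]⟩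
      have hRS : Set.range E ⊆ S := by
        rintro x ⟨i, rfl⟩
        exact (hcond i).1
      have hRcard : iterBeth lam r < #↥(Set.range E) := by
        rw [mk_range_eq E hEinj, mk_ord_toType]
        exact Order.lt_succ μ
      obtain ⟨X, hXR, hXcard, hXhom⟩ := ih A (Set.range E) (fun x => c (insert a x)) hRcard
      refine ⟨X, hXR.trans hRS, hXcard, ?_⟩
      have key : ∀ f : Finset A, ↑f ⊆ X → f.card = r + 1 + 1 →
          ∃ x : Finset A, ↑x ⊆ X ∧ x.card = r + 1 ∧ c f = c (insert a x) := by
        intro f hfX hfc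
        have hfR : ∀ b ∈ f, ∃ i, E i = b := fun b hb => hXR (hfX hb)
        choose idx hidx using hfR
        have hfne : f.Nonempty := Finset.card_pos.mp (by omega)
        set u : Finset O := f.attach.image (fun b => idx b.1 b.2) with hu
        have hune : u.Nonempty := (Finset.attach_nonempty_iff.mpr hfne).image _
        obtain ⟨m, hmmem, hmub⟩ : ∃ m ∈ u, ∀ o ∈ u, o ≤ m :=
          ⟨u.max' hune, u.max'_mem hune, fun o ho => u.le_max' o ho⟩
        have htf : E m ∈ f := by
          rcases Finset.mem_image.mp hmmem with ⟨b, hb, hbm⟩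
          rw [← hbm, hidx b.1 b.2]
          exact b.2
        set x := f.erase (E m) with hx
        have hxc : x.card = r + 1 := by
          rw [hx, Finset.card_erase_of_mem htf, hfc]
          omega
        have hxprev : ↑x ⊆ ERprev c r S O a m := by
          intro b hb
          have hbf : b ∈ f := Finset.mem_of_mem_erase hb
          have hbne : b ≠ E m := Finset.ne_of_mem_erase hb
          have hmem : idx b hbf ∈ u :=
            Finset.mem_image.mpr ⟨⟨b, hbf⟩, Finset.mem_attach _ _, rfl⟩
          have hlt : idx b hbf < m := lt_of_le_of_ne (hmub _ hmem) (by
            intro hh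
            exact hbne (by rw [← hidx b hbf, hh]))
          exact ⟨idx b hbf, hlt, by rw [hEsome, hidx b hbf]⟩
        refine ⟨x, fun b hb => hfX (Finset.mem_of_mem_erase hb), hxc, ?_⟩
        have h1 : f = insert (E m) x := (Finset.insert_erase htf).symm
        have h2 := (hcond m).2.2 x hxprev hxc
        rw [h1, h2]
      intro f g hf hfc hg hgc
      obtain ⟨xf, hxf1, hxf2, hxf3⟩ := key f hf hfc
      obtain ⟨xg, hxg1, hxg2, hxg3⟩ := key g hg hgc
      rw [hxf3, hxg3]
      exact hXhom xf xg hxf1 hxf2 hxg1 hxg2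
    · -- Case B : every sequence terminates; counting contradiction
      exfalso
      push_neg at hcase
      set O := (Order.succ μ).ord.ToType
      have hterm : ∀ a : A, ∃ i : O, ERseq c r S O a i = none := by
        intro a
        obtain ⟨i, hi⟩ := hcase a
        exact ⟨i, Option.not_isSome_iff_eq_none.mp hi⟩
      set Φ : A → O × O × (Finset O → ι) :=
        fun a => (ERiA c r S O a, ERjA c r S O a, ERTa c r S O a₀ a) with hΦ
      have hinj : Set.InjOn Φ S := ER_injOn c r S O a₀ hterm
      have hfiltmem : ∀ (i : O) (u : Finset O), ↑(u.filter (· < i)) ⊆ Set.Iio i := by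
        intro i u o ho
        exact (Finset.mem_filter.mp (Finset.mem_coe.mp ho)).2
      have hcover : Φ '' S ⊆ ⋃ i : O, Set.range
          (fun p : ({j : O // j < i} × ({u : Finset O // ↑u ⊆ Set.Iio i} → ι)) =>
            ((i, p.1.1, fun u : Finset O => p.2 ⟨u.filter (· < i), hfiltmem i u⟩)
              : O × O × (Finset O → ι))) := by
        rintro γ ⟨a, ha, rfl⟩
        apply Set.mem_iUnion.mpr
        refine ⟨ERiA c r S O a,
          ⟨⟨ERjA c r S O a, (ERjA_spec c r S O ha (hterm a)).1⟩,
            fun u => ERTa c r S O a₀ a u.1⟩, ?_⟩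
        have hstab : (fun u : Finset O =>
            ERTa c r S O a₀ a (u.filter (· < ERiA c r S O a))) = ERTa c r S O a₀ a := by
          funext u
          simp only [ERTa]
          rw [Finset.filter_true_of_mem
            (fun o ho => (Finset.mem_filter.mp ho).2)]
        show (ERiA c r S O a, ERjA c r S O a, fun u : Finset O =>
            ERTa c r S O a₀ a (u.filter (· < ERiA c r S O a))) = Φ a
        rw [hΦ, hstab]
      have hIio : ∀ i : O, #{j : O // j < i} ≤ μ := by
        intro i
        have h1 : #↥(Set.Iio i) < Order.succ μ := Cardinal.mk_Iio_ord_toType i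
        exact Order.lt_succ_iff.mp h1
      have hslice : ∀ i : O, #↥(Set.range
          (fun p : ({j : O // j < i} × ({u : Finset O // ↑u ⊆ Set.Iio i} → ι)) =>
            ((i, p.1.1, fun u : Finset O => p.2 ⟨u.filter (· < i), hfiltmem i u⟩)
              : O × O × (Finset O → ι)))) ≤ 2 ^ μ := by
        intro i
        refine mk_range_le.trans ?_
        have hsub : #{u : Finset O // ↑u ⊆ Set.Iio i} ≤ μ := by
          refine (mk_finset_subset_le _).trans (max_le hμinf ?_)
          exact hIio i
        have hfun : #({u : Finset O // ↑u ⊆ Set.Iio i} → ι) ≤ 2 ^ μ := by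
          rw [← power_def]
          calc #ι ^ #{u : Finset O // ↑u ⊆ Set.Iio i}
              ≤ lam ^ #{u : Finset O // ↑u ⊆ Set.Iio i} := power_le_power_right hι
            _ ≤ lam ^ μ := power_le_power_left (ne_of_gt (aleph0_pos.trans_le hlam)) hsub
            _ ≤ (2 ^ μ) ^ μ := power_le_power_right (hlamμ.trans hμ2)
            _ = 2 ^ (μ * μ) := power_mul.symm
            _ = 2 ^ μ := by rw [mul_eq_self hμinf]
        calc #({j : O // j < i} × ({u : Finset O // ↑u ⊆ Set.Iio i} → ι))
            = #{j : O // j < i} * #({u : Finset O // ↑u ⊆ Set.Iio i} → ι) := by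
              rw [mk_prod, lift_id, lift_id]
          _ ≤ μ * 2 ^ μ := mul_le_mul' (hIio i) hfun
          _ = 2 ^ μ := by
              rw [mul_eq_max hμinf (hμinf.trans hμ2), max_eq_right hμ2]
      have htotal : #↥S ≤ 2 ^ μ := by
        calc #↥S = #↥(Φ '' S) := (mk_image_eq_of_injOn Φ S hinj).symm
          _ ≤ #↥(⋃ i : O, Set.range
              (fun p : ({j : O // j < i} × ({u : Finset O // ↑u ⊆ Set.Iio i} → ι)) =>
                ((i, p.1.1, fun u : Finset O => p.2 ⟨u.filter (· < i), hfiltmem i u⟩)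
                  : O × O × (Finset O → ι)))) := mk_le_mk_of_subset hcover
          _ ≤ #O * ⨆ i : O, #↥(Set.range
              (fun p : ({j : O // j < i} × ({u : Finset O // ↑u ⊆ Set.Iio i} → ι)) =>
                ((i, p.1.1, fun u : Finset O => p.2 ⟨u.filter (· < i), hfiltmem i u⟩)
                  : O × O × (Finset O → ι)))) := mk_iUnion_le _
          _ ≤ Order.succ μ * 2 ^ μ := by
              rw [mk_ord_toType]
              exact mul_le_mul' le_rfl (ciSup_le' hslice)
          _ = 2 ^ μ := by
              rw [mul_eq_max (hμinf.trans (Order.le_succ μ)) (hμinf.trans hμ2),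
                max_eq_right hsucc2]
      exact hpow.not_ge htotal

end ERMain

lemma polarizedAux (r : ℕ) (hr : 0 < r) :
    ∀ (s : ℕ) (κ l : Fin s → Cardinal) (μ : Cardinal),
      (∀ i, ℵ₀ ≤ l i) →
      (∀ i, iterBeth (l i) (r - 1) < κ i) →
      (∀ i : Fin s, ∀ h : (i : ℕ) + 1 < s, 2 ^ κ i ≤ l ⟨(i : ℕ) + 1, h⟩) →
      (∀ i j : Fin s, i ≤ j → l i ≤ l j) →
      (∀ i, μ ≤ l i) →
      Polarized s κ (fun i => Order.succ (l i)) r μ := by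
  intro s
  induction s with
  | zero =>
    intro κ l μ _ _ _ _ _ A hA ι hι c
    refine ⟨fun i => i.elim0, fun i => i.elim0, ?_⟩
    intro f g _ _
    have hfg : f = g := funext fun i => i.elim0
    rw [hfg]
  | succ s ihs =>
    intro κ l μ hlinf h1 h2 hmono hμ A hA ι hι c
    classical
    have hκinf : ∀ i : Fin (s+1), ℵ₀ ≤ κ i := fun i =>
      (hlinf i).trans ((le_iterBeth _ _).trans (h1 i).le)
    haveI hAinf : ∀ i : Fin (s+1), Infinite (A i) := fun i => by
      rw [Cardinal.infinite_iff, hA]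
      exact hκinf i
    set ι' : Type := (∀ i : Fin s, Finset (A i.castSucc)) → ι with hι'def
    have hμl : ∀ i : Fin (s+1), μ ≤ l i := hμ
    -- bound the number of colors for the last coordinate
    have hι'card : #ι' ≤ l (Fin.last s) := by
      rcases Nat.eq_zero_or_pos s with hs0 | hs0
      · subst hs0
        haveI : Unique (∀ i : Fin 0, Finset (A i.castSucc)) :=
          ⟨⟨fun i => i.elim0⟩, fun f => funext fun i => i.elim0⟩
        have : #ι' = #ι := mk_congr (Equiv.funUnique _ _)
        rw [this]
        exact hι.trans (hμ _)
      · set i₀ : Fin s := ⟨s - 1, by omega⟩ with hi₀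
        set M : Cardinal := κ i₀.castSucc with hM
        have hMinf : ℵ₀ ≤ M := hκinf _
        have hM2 : 2 ^ M ≤ l (Fin.last s) := by
          have h := h2 i₀.castSucc (show s - 1 + 1 < s + 1 by omega)
          have hidx : (⟨((i₀.castSucc : Fin (s+1)) : ℕ) + 1, show s - 1 + 1 < s + 1 by omega⟩ : Fin (s+1)) = (Fin.last s) := by
            apply Fin.ext
            show s - 1 + 1 = s
            omega
          rwa [hidx] at h
        have hμM : μ ≤ 2 ^ M := by
          calc μ ≤ l i₀.castSucc := hμ _
            _ ≤ iterBeth (l i₀.castSucc) (r-1) := le_iterBeth _ _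
            _ ≤ κ i₀.castSucc := (h1 _).le
            _ ≤ 2 ^ M := (Cardinal.cantor _).le
        have hfac : ∀ i : Fin s, #(Finset (A i.castSucc)) ≤ M := by
          intro i
          rw [mk_finset_of_infinite, hA]
          rcases eq_or_lt_of_le (show (i : ℕ) ≤ s - 1 by omega) with he | hlt
          · have heq : i.castSucc = i₀.castSucc := by
              apply Fin.ext
              simpa using he
            rw [heq]
          · have hi1 : (i : ℕ) + 1 < s + 1 := by omega
            have hstep2 : 2 ^ κ i.castSucc ≤ l ⟨(i : ℕ) + 1, hi1⟩ := by
              have h := h2 i.castSucc (by simpa using hi1)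
              simpa using h
            calc κ i.castSucc ≤ 2 ^ κ i.castSucc := (Cardinal.cantor _).le
              _ ≤ l ⟨(i : ℕ) + 1, hi1⟩ := hstep2
              _ ≤ l i₀.castSucc := hmono _ _ (by
                  show (i : ℕ) + 1 ≤ s - 1
                  omega)
              _ ≤ iterBeth (l i₀.castSucc) (r-1) := le_iterBeth _ _
              _ ≤ M := (h1 _).le
        have hPi : #(∀ i : Fin s, Finset (A i.castSucc)) ≤ M := by
          rw [mk_pi]
          calc prod (fun i : Fin s => #(Finset (A i.castSucc)))
              ≤ prod (fun _ : Fin s => M) := prod_le_prod _ _ hfac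
            _ = M ^ (s : Cardinal) := by rw [prod_const', mk_fin]
            _ = M := by
                rw [show ((s : Cardinal) = ((s : ℕ) : Cardinal)) from rfl]
                exact power_nat_eq hMinf hs0
        have hιM : #ι ≤ 2 ^ M := hι.trans hμM
        calc #ι' = #ι ^ #(∀ i : Fin s, Finset (A i.castSucc)) := (power_def _ _).symm
          _ ≤ (2 ^ M) ^ #(∀ i : Fin s, Finset (A i.castSucc)) := power_le_power_right hιM
          _ ≤ (2 ^ M) ^ M := power_le_power_left
              (ne_of_gt (power_pos _ (by norm_num))) hPi
          _ = 2 ^ (M * M) := power_mul.symm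
          _ = 2 ^ M := by rw [mul_eq_self hMinf]
          _ ≤ l (Fin.last s) := hM2
    -- apply Erdős–Rado on the last coordinate
    set d : Finset (A (Fin.last s)) → ι' := fun y F => c (Fin.lastCases y F) with hd
    have hbig : iterBeth (l (Fin.last s)) (r - 1) < #(Set.univ : Set (A (Fin.last s))) := by
      rw [mk_univ, hA]
      exact h1 (Fin.last s)
    obtain ⟨Y, -, hYcard, hYhom⟩ :=
      erdosRado ι' (l (Fin.last s)) (hlinf (Fin.last s)) hι'card (r - 1) (A (Fin.last s)) Set.univ d hbig
    have hr1 : r - 1 + 1 = r := Nat.succ_pred_eq_of_pos hr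
    rw [hr1] at hYhom
    have hYinf : Y.Infinite := by
      rw [← Set.infinite_coe_iff]
      refine Cardinal.infinite_iff.mpr ?_
      rw [hYcard]
      exact (hlinf (Fin.last s)).trans (Order.le_succ _)
    obtain ⟨y₀, hy₀sub, hy₀card⟩ := hYinf.exists_subset_card_eq r
    set c'' : (∀ i : Fin s, Finset (A i.castSucc)) → ι := fun F => c (Fin.lastCases y₀ F)
      with hc''
    obtain ⟨X', hX'card, hX'hom⟩ :=
      ihs (fun i => κ i.castSucc) (fun i => l i.castSucc) μ
        (fun i => hlinf _) (fun i => h1 _)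
        (fun i h => by
          have hi1 : ((i.castSucc : Fin (s+1)) : ℕ) + 1 < s + 1 := by
            simpa using Nat.lt_succ_of_lt h
          have hh := h2 i.castSucc hi1
          have hidx : (⟨((i.castSucc : Fin (s+1)) : ℕ) + 1, hi1⟩ : Fin (s+1))
              = (⟨(i : ℕ) + 1, h⟩ : Fin s).castSucc := rfl
          rwa [hidx] at hh)
        (fun i j hij => hmono _ _ (Fin.castSucc_le_castSucc_iff.mpr hij))
        (fun i => hμ _)
        (fun i => A i.castSucc) (fun i => hA _) ι hι c''
    refine ⟨Fin.lastCases Y X', ?_, ?_⟩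
    · intro i
      induction i using Fin.lastCases with
      | last => simpa only [Fin.lastCases_last] using hYcard
      | cast i => simpa only [Fin.lastCases_castSucc] using hX'card i
    · intro f g hf hg
      have hstep : ∀ f : ∀ i, Finset (A i),
          (∀ i, ↑(f i) ⊆ (Fin.lastCases Y X' i : Set (A i)) ∧ (f i).card = r) →
          c f = c'' (fun i => f i.castSucc) := by
        intro f hf
        have hflst : ↑(f (Fin.last s)) ⊆ Y := by
          have h := (hf (Fin.last s)).1
          simpa only [Fin.lastCases_last] using h
        have h1a : c f = d (f (Fin.last s)) (fun i => f i.castSucc) := by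
          rw [hd]
          apply congrArg c
          funext i
          induction i using Fin.lastCases with
          | last => rw [Fin.lastCases_last]
          | cast i => rw [Fin.lastCases_castSucc]
        have h2a : d (f (Fin.last s)) = d y₀ :=
          hYhom (f (Fin.last s)) y₀ hflst (hf (Fin.last s)).2 hy₀sub hy₀card
        rw [h1a, h2a, hd, hc'']
      have hfc := hstep f hf
      have hgc := hstep g hg
      rw [hfc, hgc]
      apply hX'hom
      · intro i
        refine ⟨?_, (hf i.castSucc).2⟩
        have h := (hf i.castSucc).1
        simpa only [Fin.lastCases_castSucc] using h
      · intro i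
        refine ⟨?_, (hg i.castSucc).2⟩
        have h := (hg i.castSucc).1
        simpa only [Fin.lastCases_castSucc] using h

/-- If `κ_i, l_i` (`1 ≤ i ≤ s`) are infinite cardinals with `κ_i > beth_{r-1}(l_i)` and
`l_{i+1} ≥ 2^{κ_i}`, then `(κ_1,…,κ_s) → (l_1⁺,…,l_s⁺)^r_{l_1}`. -/
theorem stmt6 (s r : ℕ) (hs : 0 < s) (hr : 0 < r)
    (κ l : Fin s → Cardinal)
    (hκinf : ∀ i, ℵ₀ ≤ κ i) (hlinf : ∀ i, ℵ₀ ≤ l i)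
    (h1 : ∀ i, iterBeth (l i) (r - 1) < κ i)
    (h2 : ∀ i : Fin s, (h : (i : ℕ) + 1 < s) → 2 ^ κ i ≤ l ⟨(i : ℕ) + 1, h⟩) :
    Polarized s κ (fun i => Order.succ (l i)) r (l ⟨0, hs⟩) := by
  have hstep : ∀ k : ℕ, ∀ h : k + 1 < s, l ⟨k, Nat.lt_of_succ_lt h⟩ ≤ l ⟨k + 1, h⟩ := by
    intro k h
    calc l ⟨k, Nat.lt_of_succ_lt h⟩
        ≤ iterBeth (l ⟨k, Nat.lt_of_succ_lt h⟩) (r - 1) := le_iterBeth _ _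
      _ ≤ κ ⟨k, Nat.lt_of_succ_lt h⟩ := (h1 _).le
      _ ≤ 2 ^ κ ⟨k, Nat.lt_of_succ_lt h⟩ := (Cardinal.cantor _).le
      _ ≤ l ⟨k + 1, h⟩ := h2 ⟨k, Nat.lt_of_succ_lt h⟩ h
  have hgen : ∀ (n : ℕ) (hn : n < s) (m : ℕ) (hm : m ≤ n), l ⟨m, lt_of_le_of_lt hm hn⟩ ≤ l ⟨n, hn⟩ := by
    intro n
    induction n with
    | zero =>
      intro hn m hm
      have hm0 : m = 0 := Nat.le_zero.mp hm
      subst hm0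
      exact le_rfl
    | succ n ihn =>
      intro hn m hm
      rcases eq_or_lt_of_le hm with heq | hlt'
      · subst heq
        exact le_rfl
      · exact (ihn (Nat.lt_of_succ_lt hn) m (Nat.lt_succ_iff.mp hlt')).trans (hstep n hn)
  have hmono : ∀ i j : Fin s, i ≤ j → l i ≤ l j := by
    rintro ⟨i, hi⟩ ⟨j, hj⟩ hij
    exact hgen j hj i (Fin.mk_le_mk.mp hij)
  have hμ : ∀ i : Fin s, l ⟨0, hs⟩ ≤ l i := by
    rintro ⟨i, hi⟩
    exact hgen i hi 0 (Nat.zero_le _)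
  exact polarizedAux r hr s κ l (l ⟨0, hs⟩) hlinf h1 h2 hmono hμ
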